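/- Define p_{m,n} = 3·2^m·C(m+n,m)·∫_0^1 ∫_0^1 (1-a)^3·a^m·(1-(1-a)(1-b))^n/(3-(1-a)(2-b))^{m+n+1} db da for m,n ∈ ℕ. Then ∑_{n=0}^∞ p_{m,n} over n and summation over m,n gives a probability distribution, and the marginal over n satisfies ∑_n p_{m,n} = 3·∫_0^1 ∫_0^1 ((1-a)^3/(1+a))·(2a/(1+a))^m db da. -/

import Mathlib

open MeasureTheory
open scoped ENNReal

noncomputable def stitPmn (m n : ℕ) : ℝ :=
  3 * 2 ^ m * ((m + n).choose m : ℝ) *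
    ∫ a in (0:ℝ)..1, ∫ b in (0:ℝ)..1,
      (1 - a) ^ 3 * a ^ m * (1 - (1 - a) * (1 - b)) ^ n / (3 - (1 - a) * (2 - b)) ^ (m + n + 1)


noncomputable def F (m n : ℕ) (a b : ℝ) : ℝ :=
  (1 - a) ^ 3 * a ^ m * (1 - (1 - a) * (1 - b)) ^ n / (3 - (1 - a) * (2 - b)) ^ (m + n + 1)



lemma measurable_F (m n : ℕ) : Measurable (Function.uncurry (F m n)) := by
  unfold F Function.uncurry
  fun_prop

section bounds
variable {a b : ℝ} (ha : a ∈ Set.Icc (0:ℝ) 1) (hb : b ∈ Set.Icc (0:ℝ) 1)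
include ha hb

lemma D_ge_one : 1 ≤ 3 - (1 - a) * (2 - b) := by
  obtain ⟨ha0, ha1⟩ := ha; obtain ⟨hb0, hb1⟩ := hb
  nlinarith

lemma x_mem : 0 ≤ (1 - a) * (1 - b) ∧ (1 - a) * (1 - b) ≤ 1 := by
  obtain ⟨ha0, ha1⟩ := ha; obtain ⟨hb0, hb1⟩ := hb
  constructor <;> nlinarith

lemma F_nonneg (m n : ℕ) : 0 ≤ F m n a b := by
  obtain ⟨hx0, hx1⟩ := x_mem ha hb
  have hD := D_ge_one ha hb
  obtain ⟨ha0, ha1⟩ := ha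
  apply div_nonneg
  · have h1 : (0:ℝ) ≤ 1 - a := by linarith
    have h2 : (0:ℝ) ≤ 1 - (1 - a) * (1 - b) := by linarith
    exact mul_nonneg (mul_nonneg (pow_nonneg h1 _) (pow_nonneg ha0 _)) (pow_nonneg h2 _)
  · exact pow_nonneg (by linarith) _

lemma F_le_one (m n : ℕ) : F m n a b ≤ 1 := by
  obtain ⟨hx0, hx1⟩ := x_mem ha hb
  have hD := D_ge_one ha hb
  obtain ⟨ha0, ha1⟩ := ha
  rw [F, div_le_one (pow_pos (by linarith) _)]
  calc (1 - a) ^ 3 * a ^ m * (1 - (1 - a) * (1 - b)) ^ n ≤ 1 := by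
        apply mul_le_one₀ (mul_le_one₀ (pow_le_one₀ (by linarith) (by linarith))
          (pow_nonneg ha0 _) (pow_le_one₀ ha0 ha1)) (pow_nonneg (by linarith) _)
          (pow_le_one₀ (by linarith) (by linarith))
    _ ≤ (3 - (1 - a) * (2 - b)) ^ (m + n + 1) := one_le_pow₀ hD

lemma hasSum_F (m : ℕ) :
    HasSum (fun n => ((m + n).choose m : ℝ) * F m n a b)
      ((1 - a) ^ 3 * a ^ m / (1 + a) ^ (m + 1)) := by
  obtain ⟨hx0, hx1⟩ := x_mem ha hb
  have hD1 := D_ge_one ha hb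
  set D := 3 - (1 - a) * (2 - b) with hDdef
  set x := (1 - a) * (1 - b) with hxdef
  have hD0 : (0:ℝ) < D := by linarith
  have ha0 := ha.1
  set t : ℝ := (1 - x) / D with htdef
  have ht0 : 0 ≤ t := div_nonneg (by linarith) hD0.le
  have ht1 : t < 1 := by
    rw [div_lt_one hD0]
    have : D = 2 + a - x := by rw [hDdef, hxdef]; ring
    linarith
  have htn : ‖t‖ < 1 := by rw [Real.norm_eq_abs, abs_of_nonneg ht0]; exact ht1
  have key := hasSum_choose_mul_geometric_of_norm_lt_one (𝕜 := ℝ) m htn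
  have h1t : 1 - t = (1 + a) / D := by
    rw [htdef]
    field_simp
    rw [hDdef, hxdef]; ring
  set c : ℝ := (1 - a) ^ 3 * a ^ m / D ^ (m + 1) with hcdef
  have hDne : D ≠ 0 := ne_of_gt hD0
  have h1a : (0:ℝ) < 1 + a := by linarith
  have hEq : ∀ n : ℕ, ((m + n).choose m : ℝ) * F m n a b =
      c * (((n + m).choose m : ℝ) * t ^ n) := by
    intro n
    rw [F, hcdef, htdef, div_pow, Nat.add_comm m n,
      show (3 - (1 - a) * (2 - b)) = D from rfl, show (1 - a) * (1 - b) = x from rfl]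
    field_simp
    ring
  have hval : c * (1 / (1 - t) ^ (m + 1)) = (1 - a) ^ 3 * a ^ m / (1 + a) ^ (m + 1) := by
    rw [hcdef, h1t, div_pow]
    field_simp
  have h2 := key.mul_left c
  rw [hval] at h2
  have h3 : (fun n => ((m + n).choose m : ℝ) * F m n a b)
      = fun n => c * (((n + m).choose m : ℝ) * t ^ n) := funext hEq
  rw [h3]
  exact h2

lemma tsum_ofReal_F (m : ℕ) :
    ∑' n, (((m + n).choose m : ℝ≥0∞)) * ENNReal.ofReal (F m n a b)
      = ENNReal.ofReal ((1 - a) ^ 3 * a ^ m / (1 + a) ^ (m + 1)) := by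
  have hs := hasSum_F ha hb m
  rw [← hs.tsum_eq, ENNReal.ofReal_tsum_of_nonneg
    (fun n => mul_nonneg (Nat.cast_nonneg _) (F_nonneg ha hb m n)) hs.summable]
  exact (tsum_congr fun n => by
    rw [ENNReal.ofReal_mul (Nat.cast_nonneg _), ENNReal.ofReal_natCast]).symm

end bounds

noncomputable def innerL (m n : ℕ) (a : ℝ) : ℝ≥0∞ :=
  ∫⁻ b in Set.Ioc (0:ℝ) 1, ENNReal.ofReal (F m n a b)

noncomputable def LL (m n : ℕ) : ℝ≥0∞ :=
  ∫⁻ a in Set.Ioc (0:ℝ) 1, innerL m n a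

lemma meas_ofReal_F (m n : ℕ) (a : ℝ) :
    Measurable (fun b => ENNReal.ofReal (F m n a b)) :=
  (((measurable_F m n).comp
    (measurable_const.prodMk measurable_id : Measurable fun b : ℝ => (a, b)))).ennreal_ofReal

lemma meas_innerL (m n : ℕ) : Measurable (innerL m n) :=
  Measurable.lintegral_prod_right ((measurable_F m n).ennreal_ofReal)

lemma innerL_le_one {a : ℝ} (ha : a ∈ Set.Icc (0:ℝ) 1) (m n : ℕ) : innerL m n a ≤ 1 := by
  calc innerL m n a ≤ ∫⁻ _ in Set.Ioc (0:ℝ) 1, 1 := by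
        apply setLIntegral_mono' measurableSet_Ioc
        intro b hb
        exact ENNReal.ofReal_le_one.2 (F_le_one ha (Set.Ioc_subset_Icc_self hb) m n)
    _ = 1 := by simp [Real.volume_Ioc]

lemma LL_le_one (m n : ℕ) : LL m n ≤ 1 := by
  calc LL m n ≤ ∫⁻ _ in Set.Ioc (0:ℝ) 1, 1 :=
        setLIntegral_mono' measurableSet_Ioc fun a haI =>
          innerL_le_one (Set.Ioc_subset_Icc_self haI) m n
    _ = 1 := by simp [Real.volume_Ioc]

lemma stit_eq (m n : ℕ) :
    stitPmn m n = 3 * 2 ^ m * ((m + n).choose m : ℝ) * (LL m n).toReal := by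
  rw [stitPmn]
  congr 1
  rw [intervalIntegral.integral_of_le zero_le_one]
  have step1 : Set.EqOn (fun a => ∫ b in (0:ℝ)..1,
      (1 - a) ^ 3 * a ^ m * (1 - (1 - a) * (1 - b)) ^ n / (3 - (1 - a) * (2 - b)) ^ (m + n + 1))
      (fun a => (innerL m n a).toReal) (Set.Ioc (0:ℝ) 1) := by
    intro a haI
    simp only
    rw [intervalIntegral.integral_of_le zero_le_one]
    have : (∫ b in Set.Ioc (0:ℝ) 1,
        (1 - a) ^ 3 * a ^ m * (1 - (1 - a) * (1 - b)) ^ n / (3 - (1 - a) * (2 - b)) ^ (m + n + 1))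
        = ∫ b in Set.Ioc (0:ℝ) 1, F m n a b := rfl
    rw [this, integral_eq_lintegral_of_nonneg_ae]
    · rfl
    · filter_upwards [ae_restrict_mem measurableSet_Ioc] with b hb
      exact F_nonneg (Set.Ioc_subset_Icc_self haI) (Set.Ioc_subset_Icc_self hb) m n
    · exact (((measurable_F m n).comp
        (measurable_const.prodMk measurable_id : Measurable fun b : ℝ => (a, b)))).aestronglyMeasurable
  rw [setIntegral_congr_fun measurableSet_Ioc step1]
  rw [integral_eq_lintegral_of_nonneg_ae (ae_of_all _ fun a => ENNReal.toReal_nonneg)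
    ((meas_innerL m n).ennreal_toReal.aestronglyMeasurable)]
  rw [LL]
  congr 1
  apply setLIntegral_congr_fun measurableSet_Ioc
  intro a haI
  exact ENNReal.ofReal_toReal
    (((innerL_le_one (Set.Ioc_subset_Icc_self haI) m n).trans_lt ENNReal.one_lt_top).ne)

noncomputable def Mm (m : ℕ) : ℝ≥0∞ :=
  ∫⁻ a in Set.Ioc (0:ℝ) 1, ENNReal.ofReal ((1 - a) ^ 3 * a ^ m / (1 + a) ^ (m + 1))

lemma meas_Jm (m : ℕ) :
    Measurable fun a : ℝ => (1 - a) ^ 3 * a ^ m / (1 + a) ^ (m + 1) := by fun_prop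

lemma Jm_nonneg {a : ℝ} (ha : a ∈ Set.Icc (0:ℝ) 1) (m : ℕ) :
    0 ≤ (1 - a) ^ 3 * a ^ m / (1 + a) ^ (m + 1) := by
  obtain ⟨ha0, ha1⟩ := ha
  apply div_nonneg
  · exact mul_nonneg (pow_nonneg (by linarith) _) (pow_nonneg ha0 _)
  · exact pow_nonneg (by linarith) _

lemma Jm_le_one {a : ℝ} (ha : a ∈ Set.Icc (0:ℝ) 1) (m : ℕ) :
    (1 - a) ^ 3 * a ^ m / (1 + a) ^ (m + 1) ≤ 1 := by
  obtain ⟨ha0, ha1⟩ := ha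
  rw [div_le_one (pow_pos (by linarith) _)]
  calc (1 - a) ^ 3 * a ^ m ≤ 1 :=
        mul_le_one₀ (pow_le_one₀ (by linarith) (by linarith)) (pow_nonneg ha0 _)
          (pow_le_one₀ ha0 ha1)
    _ ≤ (1 + a) ^ (m + 1) := one_le_pow₀ (by linarith)

lemma Mm_le_one (m : ℕ) : Mm m ≤ 1 := by
  calc Mm m ≤ ∫⁻ _ in Set.Ioc (0:ℝ) 1, 1 :=
        setLIntegral_mono' measurableSet_Ioc fun a haI =>
          ENNReal.ofReal_le_one.2 (Jm_le_one (Set.Ioc_subset_Icc_self haI) m)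
    _ = 1 := by simp [Real.volume_Ioc]

lemma marg1 (m : ℕ) : ∑' n, stitPmn m n = 3 * 2 ^ m * (Mm m).toReal := by
  have hLne : ∀ n : ℕ, (((m + n).choose m : ℝ≥0∞)) * LL m n ≠ ⊤ := fun n =>
    ENNReal.mul_ne_top (ENNReal.natCast_ne_top _)
      (((LL_le_one m n).trans_lt ENNReal.one_lt_top).ne)
  have h1 : ∀ n : ℕ, stitPmn m n
      = 3 * 2 ^ m * ((((m + n).choose m : ℝ≥0∞)) * LL m n).toReal := by
    intro n
    rw [stit_eq, ENNReal.toReal_mul, ENNReal.toReal_natCast]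
    ring
  rw [tsum_congr h1, tsum_mul_left, ← ENNReal.tsum_toReal_eq hLne]
  have hS : ∑' n : ℕ, (((m + n).choose m : ℝ≥0∞)) * LL m n = Mm m := by
    have e1 : ∀ n : ℕ, (((m + n).choose m : ℝ≥0∞)) * LL m n
        = ∫⁻ a in Set.Ioc (0:ℝ) 1, (((m + n).choose m : ℝ≥0∞)) * innerL m n a := fun n =>
      (lintegral_const_mul _ (meas_innerL m n)).symm
    rw [tsum_congr e1, ← lintegral_tsum (fun n => ((meas_innerL m n).const_mul _).aemeasurable)]
    apply setLIntegral_congr_fun measurableSet_Ioc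
    intro a haI
    simp only
    have e2 : ∀ n : ℕ, (((m + n).choose m : ℝ≥0∞)) * innerL m n a
        = ∫⁻ b in Set.Ioc (0:ℝ) 1, (((m + n).choose m : ℝ≥0∞)) * ENNReal.ofReal (F m n a b) :=
      fun n => (lintegral_const_mul _ (meas_ofReal_F m n a)).symm
    rw [tsum_congr e2,
      ← lintegral_tsum (fun n => ((meas_ofReal_F m n a).const_mul _).aemeasurable)]
    rw [setLIntegral_congr_fun measurableSet_Ioc
      (by intro b hbI
          exact tsum_ofReal_F (Set.Ioc_subset_Icc_self haI) (Set.Ioc_subset_Icc_self hbI) m)]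
    simp [Real.volume_Ioc]
  rw [hS]

lemma marginal (m : ℕ) : ∑' n, stitPmn m n =
    3 * ∫ a in (0:ℝ)..1, ∫ b in (0:ℝ)..1, ((1 - a) ^ 3 / (1 + a)) * (2 * a / (1 + a)) ^ m := by
  rw [marg1 m]
  have hRinner : (fun a : ℝ => ∫ b in (0:ℝ)..1, ((1 - a) ^ 3 / (1 + a)) * (2 * a / (1 + a)) ^ m)
      = fun a : ℝ => ((1 - a) ^ 3 / (1 + a)) * (2 * a / (1 + a)) ^ m := by
    funext a
    simp [intervalIntegral.integral_const]
  rw [hRinner]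
  have hMm : (Mm m).toReal = ∫ a in Set.Ioc (0:ℝ) 1, (1 - a) ^ 3 * a ^ m / (1 + a) ^ (m + 1) := by
    rw [integral_eq_lintegral_of_nonneg_ae, Mm]
    · filter_upwards [ae_restrict_mem measurableSet_Ioc] with a haI
      exact Jm_nonneg (Set.Ioc_subset_Icc_self haI) m
    · exact (meas_Jm m).aestronglyMeasurable
  rw [hMm, intervalIntegral.integral_of_le zero_le_one]
  rw [← integral_const_mul, ← integral_const_mul]
  apply setIntegral_congr_fun measurableSet_Ioc
  intro a haI
  obtain ⟨ha0, ha1⟩ := haI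
  have h1a : (0:ℝ) < 1 + a := by linarith
  simp only
  rw [div_pow, mul_pow]
  field_simp
  ring

lemma hasSum_geom_part {a : ℝ} (ha : a ∈ Set.Ioc (0:ℝ) 1) :
    HasSum (fun m : ℕ => 2 ^ m * ((1 - a) ^ 3 * a ^ m / (1 + a) ^ (m + 1))) ((1 - a) ^ 2) := by
  obtain ⟨ha0, ha1⟩ := ha
  have h1a : (0:ℝ) < 1 + a := by linarith
  rcases eq_or_lt_of_le ha1 with h | h
  · have hz : (fun m : ℕ => 2 ^ m * ((1 - a) ^ 3 * a ^ m / (1 + a) ^ (m + 1)))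
        = fun _ : ℕ => (0:ℝ) := by
      funext m; rw [h]; norm_num
    rw [hz, h]
    simpa using hasSum_zero
  · set r : ℝ := 2 * a / (1 + a) with hrdef
    have hr0 : 0 ≤ r := by positivity
    have hr1 : r < 1 := by rw [hrdef, div_lt_one h1a]; linarith
    have key := (hasSum_geometric_of_lt_one hr0 hr1).mul_left ((1 - a) ^ 3 / (1 + a))
    have h1ane : (1 + a) ≠ 0 := ne_of_gt h1a
    have h1ane' : (1 - a) ≠ 0 := ne_of_gt (by linarith)
    have hval : (1 - a) ^ 3 / (1 + a) * (1 - r)⁻¹ = (1 - a) ^ 2 := by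
      have h1r : 1 - r = (1 - a) / (1 + a) := by rw [hrdef]; field_simp; ring
      rw [h1r, inv_div]
      field_simp
    have heq : (fun m : ℕ => 2 ^ m * ((1 - a) ^ 3 * a ^ m / (1 + a) ^ (m + 1)))
        = fun m : ℕ => ((1 - a) ^ 3 / (1 + a)) * r ^ m := by
      funext m
      rw [hrdef, div_pow, mul_pow]
      field_simp
      ring
    rw [heq, ← hval]
    exact key

lemma tsum_ofReal_part {a : ℝ} (ha : a ∈ Set.Ioc (0:ℝ) 1) :
    ∑' m : ℕ, (2:ℝ≥0∞) ^ m * ENNReal.ofReal ((1 - a) ^ 3 * a ^ m / (1 + a) ^ (m + 1))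
      = ENNReal.ofReal ((1 - a) ^ 2) := by
  have hs := hasSum_geom_part ha
  have haI := Set.Ioc_subset_Icc_self ha
  rw [← hs.tsum_eq, ENNReal.ofReal_tsum_of_nonneg
    (fun m => mul_nonneg (pow_nonneg (by norm_num) _) (Jm_nonneg haI m)) hs.summable]
  exact (tsum_congr fun m => by
    rw [ENNReal.ofReal_mul (pow_nonneg (by norm_num) _), ENNReal.ofReal_pow (by norm_num),
      ENNReal.ofReal_ofNat]).symm

lemma part1 : ∑' m, ∑' n, stitPmn m n = 1 := by
  have h1 : ∀ m : ℕ, ∑' n, stitPmn m n = ((3 * 2 ^ m * Mm m : ℝ≥0∞)).toReal := by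
    intro m
    rw [marg1, ENNReal.toReal_mul, ENNReal.toReal_mul, ENNReal.toReal_pow,
      ENNReal.toReal_ofNat, ENNReal.toReal_ofNat]
  have hne : ∀ m : ℕ, (3 * 2 ^ m * Mm m : ℝ≥0∞) ≠ ⊤ := fun m =>
    ENNReal.mul_ne_top (ENNReal.mul_ne_top (by norm_num) (ENNReal.pow_ne_top (by norm_num)))
      (((Mm_le_one m).trans_lt ENNReal.one_lt_top).ne)
  rw [tsum_congr h1, ← ENNReal.tsum_toReal_eq hne]
  have hint : ∫⁻ a in Set.Ioc (0:ℝ) 1, ENNReal.ofReal ((1 - a) ^ 2) = ENNReal.ofReal (1/3) := by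
    rw [← ofReal_integral_eq_lintegral_ofReal]
    · congr 1
      rw [← intervalIntegral.integral_of_le zero_le_one]
      have hc := intervalIntegral.integral_comp_sub_left (a := (0:ℝ)) (b := 1)
        (fun x : ℝ => x ^ 2) 1
      simp only [sub_zero, sub_self] at hc
      rw [hc, integral_pow]
      norm_num
    · exact (Continuous.integrableOn_Ioc (by fun_prop))
    · exact ae_of_all _ fun a => sq_nonneg _
  have hS : (∑' m : ℕ, (3:ℝ≥0∞) * 2 ^ m * Mm m) = 3 * ENNReal.ofReal (1/3) := by
    have e1 : ∀ m : ℕ, (3:ℝ≥0∞) * 2 ^ m * Mm m = 3 * (2 ^ m * Mm m) := fun m => mul_assoc _ _ _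
    rw [tsum_congr e1, ENNReal.tsum_mul_left]
    congr 1
    have e2 : ∀ m : ℕ, (2:ℝ≥0∞) ^ m * Mm m
        = ∫⁻ a in Set.Ioc (0:ℝ) 1,
            (2:ℝ≥0∞) ^ m * ENNReal.ofReal ((1 - a) ^ 3 * a ^ m / (1 + a) ^ (m + 1)) := fun m =>
      (lintegral_const_mul _ (meas_Jm m).ennreal_ofReal).symm
    rw [tsum_congr e2,
      ← lintegral_tsum (fun m => (((meas_Jm m).ennreal_ofReal).const_mul _).aemeasurable)]
    rw [setLIntegral_congr_fun measurableSet_Ioc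
      (by intro a haI; exact tsum_ofReal_part haI)]
    exact hint
  rw [hS, ENNReal.toReal_mul, ENNReal.toReal_ofNat, ENNReal.toReal_ofReal (by norm_num)]
  norm_num

theorem stit_pmn_distribution_and_marginal :
    (∑' m : ℕ, ∑' n : ℕ, stitPmn m n = 1) ∧
    ∀ m : ℕ, ∑' n : ℕ, stitPmn m n =
      3 * ∫ a in (0:ℝ)..1, ∫ b in (0:ℝ)..1,
        ((1 - a) ^ 3 / (1 + a)) * (2 * a / (1 + a)) ^ m := by
  exact ⟨part1, marginal⟩
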